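/- For a standard normal random variable Z with tail function Φ̄(x) = P(Z ≥ x) and density φ(x) = e^{-x²/2}/√(2π), the inverse Mills ratio r(x) = φ(x)/Φ̄(x) is strictly increasing on ℝ. -/

import Mathlib

open MeasureTheory Real Set Filter

noncomputable def phi (x : ℝ) : ℝ := Real.exp (-x^2/2) / Real.sqrt (2*Real.pi)
noncomputable def Phibar (x : ℝ) : ℝ := ∫ u in Set.Ioi x, phi u
noncomputable def mills (x : ℝ) : ℝ := phi x / Phibar x

lemma phi_pos (x : ℝ) : 0 < phi x := by
  unfold phi
  positivity

lemma phi_cont : Continuous phi := by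
  unfold phi
  fun_prop

lemma integrable_phi : Integrable phi := by
  have h := (integrable_exp_neg_mul_sq (by norm_num : (0:ℝ) < 1/2)).div_const
      (Real.sqrt (2*Real.pi))
  convert h using 2 with x
  unfold phi
  ring_nf

lemma hasDerivAt_phi (x : ℝ) : HasDerivAt phi (-x * phi x) x := by
  have h1 : HasDerivAt (fun x : ℝ => -x^2/2) (-x) x := by
    have := ((hasDerivAt_pow 2 x).neg).div_const 2
    refine this.congr_deriv ?_
    simp
    ring
  have h2 := (h1.exp).div_const (Real.sqrt (2*Real.pi))
  refine h2.congr_deriv ?_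
  unfold phi
  ring

lemma tendsto_phi : Tendsto phi atTop (nhds 0) := by
  have h1 : Tendsto (fun x : ℝ => -x^2/2) atTop atBot := by
    apply Tendsto.atBot_div_const (by norm_num)
    have h0 : Tendsto (fun x : ℝ => x^2) atTop atTop := tendsto_pow_atTop (by norm_num)
    exact tendsto_neg_atTop_atBot.comp h0
  have h2 : Tendsto (fun x : ℝ => Real.exp (-x^2/2)) atTop (nhds 0) :=
    (Real.tendsto_exp_atBot).comp h1
  unfold phi
  simpa using h2.div_const (Real.sqrt (2*Real.pi))

lemma hasDerivAt_Phibar (x : ℝ) : HasDerivAt Phibar (-phi x) x := by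
  have hfun : Phibar = fun y => (∫ u, phi u) - (∫ u in Set.Iic 0, phi u)
      - ∫ u in (0:ℝ)..y, phi u := by
    funext y
    have h1 : (∫ u in Set.Iic y, phi u) + ∫ u in Set.Ioi y, phi u = ∫ u, phi u := by
      rw [← setIntegral_union (Set.Iic_disjoint_Ioi le_rfl) measurableSet_Ioi
        integrable_phi.integrableOn integrable_phi.integrableOn, Set.Iic_union_Ioi, setIntegral_univ]
    have h2 : (∫ u in Set.Iic y, phi u) - ∫ u in Set.Iic 0, phi u
        = ∫ u in (0:ℝ)..y, phi u := by
      rw [intervalIntegral.integral_Iic_sub_Iic integrable_phi.integrableOn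
        integrable_phi.integrableOn]
    unfold Phibar
    linarith
  rw [hfun]
  have h3 : HasDerivAt (fun y => ∫ u in (0:ℝ)..y, phi u) (phi x) x :=
    intervalIntegral.integral_hasDerivAt_right integrable_phi.intervalIntegrable
      phi_cont.aestronglyMeasurable.stronglyMeasurableAtFilter phi_cont.continuousAt
  exact ((hasDerivAt_const x ((∫ u, phi u) - ∫ u in Set.Iic 0, phi u)).sub h3).congr_deriv (by simp)

lemma Phibar_pos (x : ℝ) : 0 < Phibar x := by
  unfold Phibar
  apply setIntegral_pos_iff_support_of_nonneg_ae _ _ |>.mpr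
  · have hs : Function.support phi = Set.univ := Set.eq_univ_of_forall fun u => (phi_pos u).ne'
    rw [hs]
    simpa using measure_Ioi_pos (volume : Measure ℝ).toOpenPosMeasure x
  · filter_upwards with u using (phi_pos u).le
  · exact integrable_phi.integrableOn

lemma key_nonneg (x : ℝ) : x * Phibar x ≤ phi x := by
  rcases le_or_gt x 0 with hx | hx
  · have := (Phibar_pos x)
    nlinarith [phi_pos x]
  · have hderiv : ∀ u ∈ Set.Ioi x, HasDerivAt (fun u => -phi u) (u * phi u) u := by
      intro u _
      exact (hasDerivAt_phi u).neg.congr_deriv (by ring)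
    have hpos : ∀ u ∈ Set.Ioi x, 0 ≤ u * phi u := fun u hu =>
      mul_nonneg (le_of_lt (lt_trans hx hu)) (phi_pos u).le
    have htend : Tendsto (fun u => -phi u) atTop (nhds 0) := by
      simpa using tendsto_phi.neg
    have hint : ∫ u in Set.Ioi x, u * phi u = 0 - (-phi x) :=
      integral_Ioi_of_hasDerivAt_of_nonneg
        (phi_cont.neg.continuousWithinAt) hderiv hpos htend
    have hintegrable : IntegrableOn (fun u => u * phi u) (Set.Ioi x) :=
      integrableOn_Ioi_deriv_of_nonneg (phi_cont.neg.continuousWithinAt) hderiv hpos htend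
    have hmono : ∫ u in Set.Ioi x, x * phi u ≤ ∫ u in Set.Ioi x, u * phi u := by
      apply setIntegral_mono_on (integrable_phi.integrableOn.const_mul x) hintegrable
        measurableSet_Ioi
      intro u hu
      exact mul_le_mul_of_nonneg_right (le_of_lt hu) (phi_pos u).le
    have : x * Phibar x = ∫ u in Set.Ioi x, x * phi u := by
      unfold Phibar
      rw [integral_const_mul]
    linarith
  
lemma key_pos (x : ℝ) : x * Phibar x < phi x := by
  set g : ℝ → ℝ := fun y => phi y - y * Phibar y with hg
  have hderiv : ∀ y, HasDerivAt g (-Phibar y) y := by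
    intro y
    have h := (hasDerivAt_phi y).sub ((hasDerivAt_id y).mul (hasDerivAt_Phibar y))
    refine h.congr_deriv ?_
    simp only [id]
    ring
  have hanti : StrictAnti g := by
    apply strictAnti_of_deriv_neg
    intro y
    rw [(hderiv y).deriv]
    simpa using Phibar_pos y
  have h1 : g (x + 1) < g x := hanti (by linarith)
  have h2 : 0 ≤ g (x + 1) := by
    have := key_nonneg (x + 1)
    simp only [hg]
    linarith
  simp only [hg] at h1 h2
  linarith

theorem mills_strictMono : StrictMono mills := by
  apply strictMono_of_deriv_pos
  intro x
  have hd : HasDerivAt mills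
      ((-x * phi x * Phibar x - phi x * (-phi x)) / (Phibar x)^2) x := by
    unfold mills
    exact (hasDerivAt_phi x).div (hasDerivAt_Phibar x) (Phibar_pos x).ne'
  rw [hd.deriv]
  have h1 := key_pos x
  have h2 := phi_pos x
  have h3 := Phibar_pos x
  have : 0 < -x * phi x * Phibar x - phi x * (-phi x) := by nlinarith
  positivity
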